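/- Fix n ≥ 1 and set b = ⌊log₂ n⌋ + 2. In ℤ[X₀, …, X_{b−1}], let I′ be the ideal generated by Xᵢ² − (−2·Xᵢ + X_{i+1}) for 0 ≤ i ≤ b−2 together with X_{b−1}². If g is a multilinear polynomial with (1 + X₀)ⁿ − g ∈ I′, then every coefficient of g is 0 or 1. -/

import Mathlib

open MvPolynomial

/-- The generators of the ideal `I′`: `Xᵢ² − (−2Xᵢ + X_{i+1})` for `i ≤ b-2`, and `X_{b-1}²`. -/
noncomputable def gens' (b : ℕ) : Fin b → MvPolynomial (Fin b) ℤ := fun i =>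
  if h : (i : ℕ) + 1 < b then X i ^ 2 - (-2 * X i + X ⟨(i : ℕ) + 1, h⟩) else X i ^ 2

/-- The auxiliary polynomial `(1+t)^(2^k) - 1`. -/
noncomputable def qq (k : ℕ) : Polynomial ℤ := (1 + Polynomial.X) ^ (2 ^ k) - 1

lemma one_add_X_monic : (1 + Polynomial.X : Polynomial ℤ).Monic := by
  simpa [add_comm] using Polynomial.monic_X_add_C (1 : ℤ)

lemma one_add_X_natDegree : (1 + Polynomial.X : Polynomial ℤ).natDegree = 1 := by
  simpa [add_comm] using Polynomial.natDegree_X_add_C (1 : ℤ)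

lemma pow_natDegree (k : ℕ) : ((1 + Polynomial.X : Polynomial ℤ) ^ (2 ^ k)).natDegree = 2 ^ k := by
  rw [Polynomial.natDegree_pow, one_add_X_natDegree, mul_one]

lemma qq_monic (k : ℕ) : (qq k).Monic := by
  have h1 : ((1 + Polynomial.X : Polynomial ℤ) ^ (2 ^ k)).Monic := one_add_X_monic.pow _
  have hdeg : (0 : WithBot ℕ) < ((1 + Polynomial.X : Polynomial ℤ) ^ (2 ^ k)).degree := by
    rw [Polynomial.degree_eq_natDegree h1.ne_zero, pow_natDegree]
    exact_mod_cast Nat.pos_of_ne_zero (by positivity)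
  have : qq k = (1 + Polynomial.X) ^ (2 ^ k) + (-1) := by rw [qq]; ring
  rw [this]
  refine h1.add_of_left ?_
  calc ((-1 : Polynomial ℤ)).degree ≤ 0 := by
        simpa using Polynomial.degree_neg (1 : Polynomial ℤ) ▸ Polynomial.degree_one_le
    _ < _ := hdeg

lemma qq_natDegree (k : ℕ) : (qq k).natDegree = 2 ^ k := by
  have h1 : ((1 + Polynomial.X : Polynomial ℤ) ^ (2 ^ k)).Monic := one_add_X_monic.pow _
  have : qq k = (1 + Polynomial.X) ^ (2 ^ k) + (-1) := by rw [qq]; ring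
  rw [this, Polynomial.natDegree_add_eq_left_of_natDegree_lt, pow_natDegree]
  rw [pow_natDegree]
  simpa using Nat.pos_of_ne_zero (a := 2 ^ k) (by positivity)

/-- The evaluation map sending `X i ↦ (1+t)^(2^i) - 1`. -/
noncomputable def AA (b : ℕ) : MvPolynomial (Fin b) ℤ →ₐ[ℤ] Polynomial ℤ :=
  aeval fun i : Fin b => qq (i : ℕ)

/-- The degree function on exponents. -/
def dd {b : ℕ} (m : Fin b →₀ ℕ) : ℕ := ∑ i : Fin b, m i * 2 ^ (i : ℕ)

lemma sum_pow_lt {b : ℕ} (f : Fin b → ℕ) (hf : ∀ i, f i ≤ 1) :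
    ∑ i : Fin b, f i * 2 ^ (i : ℕ) < 2 ^ b := by
  induction b with
  | zero => simp
  | succ c ih =>
    rw [Fin.sum_univ_castSucc]
    simp only [Fin.coe_castSucc]
    have h1 : ∑ i : Fin c, f i.castSucc * 2 ^ (i : ℕ) < 2 ^ c := by
      simpa using ih (fun i => f i.castSucc) (fun i => hf _)
    have h2 : f (Fin.last c) ≤ 1 := hf _
    have h3 : (Fin.last c : ℕ) = c := rfl
    rw [h3, pow_succ]
    rcases Nat.le_one_iff_eq_zero_or_eq_one.mp h2 with h | h <;> rw [h] <;> omega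

lemma sum_pow_inj {b : ℕ} (f g : Fin b → ℕ) (hf : ∀ i, f i ≤ 1) (hg : ∀ i, g i ≤ 1)
    (h : ∑ i : Fin b, f i * 2 ^ (i : ℕ) = ∑ i : Fin b, g i * 2 ^ (i : ℕ)) : ∀ i, f i = g i := by
  induction b with
  | zero => exact fun i => i.elim0
  | succ c ih =>
    rw [Fin.sum_univ_castSucc, Fin.sum_univ_castSucc] at h
    simp only [Fin.coe_castSucc] at h
    have h1 : ∑ i : Fin c, f i.castSucc * 2 ^ (i : ℕ) < 2 ^ c := by
      simpa using sum_pow_lt (fun i => f i.castSucc) (fun i => hf _)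
    have h2 : ∑ i : Fin c, g i.castSucc * 2 ^ (i : ℕ) < 2 ^ c := by
      simpa using sum_pow_lt (fun i => g i.castSucc) (fun i => hg _)
    have h3 : (Fin.last c : ℕ) = c := rfl
    rw [h3] at h
    have hfl := hf (Fin.last c)
    have hgl := hg (Fin.last c)
    have key : f (Fin.last c) = g (Fin.last c) ∧
        ∑ i : Fin c, f i.castSucc * 2 ^ (i : ℕ) = ∑ i : Fin c, g i.castSucc * 2 ^ (i : ℕ) := by
      rcases Nat.le_one_iff_eq_zero_or_eq_one.mp hfl with hh | hh <;>
        rcases Nat.le_one_iff_eq_zero_or_eq_one.mp hgl with hh' | hh' <;>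
        rw [hh, hh'] at h ⊢ <;> constructor <;> omega
    have tail := ih (fun i => f i.castSucc) (fun i => g i.castSucc)
      (fun i => hf _) (fun i => hg _) key.2
    intro i
    refine Fin.lastCases key.1 (fun j => tail j) i

lemma prodQ_monic {b : ℕ} (m : Fin b →₀ ℕ) : (∏ i : Fin b, qq (i : ℕ) ^ m i).Monic :=
  Polynomial.monic_prod_of_monic _ _ (fun i _ => (qq_monic _).pow _)

lemma prodQ_natDegree {b : ℕ} (m : Fin b →₀ ℕ) :
    (∏ i : Fin b, qq (i : ℕ) ^ m i).natDegree = dd m := by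
  rw [Polynomial.natDegree_prod _ _ (fun (i : Fin b) _ => ((qq_monic (i:ℕ)).pow (m i)).ne_zero)]
  simp [Polynomial.natDegree_pow, qq_natDegree, dd, mul_comm]

lemma AA_monomial {b : ℕ} (m : Fin b →₀ ℕ) (c : ℤ) :
    AA b (monomial m c) = Polynomial.C c * ∏ i : Fin b, qq (i : ℕ) ^ m i := by
  rw [AA, aeval_monomial, Finsupp.prod_fintype _ _ (fun i => pow_zero _)]
  rfl

lemma AA_inj {b : ℕ} (p : MvPolynomial (Fin b) ℤ)
    (hml : ∀ m ∈ p.support, ∀ i : Fin b, m i ≤ 1) (h : AA b p = 0) : p = 0 := by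
  by_contra hp
  obtain ⟨m, hm, hmax⟩ := Finset.exists_max_image p.support dd
    (MvPolynomial.support_nonempty.mpr hp)
  have hexp : (AA b p).coeff (dd m) = p.coeff m := by
    conv_lhs => rw [p.as_sum, map_sum, Polynomial.finset_sum_coeff]
    rw [Finset.sum_eq_single m]
    · rw [AA_monomial, Polynomial.coeff_C_mul, ← prodQ_natDegree m,
        (prodQ_monic m).coeff_natDegree, mul_one]
    · intro m' hm' hne
      rw [AA_monomial, Polynomial.coeff_C_mul]
      have hlt : dd m' < dd m := by
        refine lt_of_le_of_ne (hmax m' hm') (fun hdd => hne ?_)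
        have := sum_pow_inj (fun i => m' i) (fun i => m i) (hml m' hm') (hml m hm) hdd
        exact Finsupp.ext this
      rw [Polynomial.coeff_eq_zero_of_natDegree_lt (by rw [prodQ_natDegree]; exact hlt), mul_zero]
    · intro hm'; exact absurd hm hm'
  rw [h, Polynomial.coeff_zero] at hexp
  exact (MvPolynomial.mem_support_iff.mp hm) hexp.symm

lemma nu_apply {b : ℕ} (t : Finset (Fin b)) (j : Fin b) :
    (∑ i ∈ t, Finsupp.single i 1 : Fin b →₀ ℕ) j = if j ∈ t then 1 else 0 := by
  classical
  rw [Finsupp.finset_sum_apply]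
  simp [Finsupp.single_apply]

lemma nu_inj {b : ℕ} {t u : Finset (Fin b)}
    (h : (∑ i ∈ t, Finsupp.single i 1 : Fin b →₀ ℕ) = ∑ i ∈ u, Finsupp.single i 1) : t = u := by
  ext j
  have := congrArg (fun f : Fin b →₀ ℕ => f j) h
  simp only [nu_apply] at this
  by_cases h1 : j ∈ t <;> by_cases h2 : j ∈ u <;> simp [h1, h2] at this ⊢

lemma coeff_prod_one_add_X {b : ℕ} (s : Finset (Fin b)) (m : Fin b →₀ ℕ) :
    (∏ i ∈ s, (1 + X i : MvPolynomial (Fin b) ℤ)).coeff m =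
      (((s.powerset.filter (fun t => (∑ i ∈ t, Finsupp.single i 1 : Fin b →₀ ℕ) = m))).card : ℤ) := by
  classical
  have h1 : ∏ i ∈ s, (1 + X i : MvPolynomial (Fin b) ℤ) =
      ∑ t ∈ s.powerset, monomial (∑ i ∈ t, Finsupp.single i 1) (1 : ℤ) := by
    rw [Finset.prod_congr rfl (fun i _ => add_comm 1 (X i : MvPolynomial (Fin b) ℤ)),
      Finset.prod_add]
    refine Finset.sum_congr rfl (fun t _ => ?_)
    rw [monomial_sum_index, map_one, one_mul, Finset.prod_const_one, mul_one]
    refine Finset.prod_congr rfl (fun i _ => ?_)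
    rw [← X_pow_eq_monomial, pow_one]
  rw [h1, MvPolynomial.coeff_sum]
  simp only [coeff_monomial]
  rw [← Finset.sum_boole]

theorem stmt7 (n : ℕ) (hn : 1 ≤ n) (b : ℕ) (hb : b = Nat.log 2 n + 2)
    (g : MvPolynomial (Fin b) ℤ)
    (hml : ∀ m ∈ g.support, ∀ i : Fin b, m i ≤ 1)
    (hg : (1 + X (⟨0, by omega⟩ : Fin b)) ^ n - g ∈ Ideal.span (Set.range (gens' b))) :
    ∀ m : Fin b →₀ ℕ, g.coeff m = 0 ∨ g.coeff m = 1 := by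
  classical
  intro m
  have hb2 : 2 ≤ b := by omega
  have hnlt : n < 2 ^ (b - 1) := by
    have h := Nat.lt_pow_succ_log_self (by norm_num : 1 < 2) n
    have hb1 : b - 1 = Nat.log 2 n + 1 := by omega
    rw [hb1]; exact h
  set i0 : Fin b := (⟨0, by omega⟩ : Fin b) with hi0
  -- the image of the ideal membership
  have hfdvd : qq (b - 1) ^ 2 ∣ (1 + Polynomial.X) ^ n - AA b g := by
    have hmem := Ideal.mem_map_of_mem (AA b).toRingHom hg
    rw [Ideal.map_span] at hmem
    have hle : Ideal.span ((AA b).toRingHom '' Set.range (gens' b)) ≤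
        Ideal.span {qq (b - 1) ^ 2} := by
      rw [Ideal.span_le]
      rintro _ ⟨_, ⟨i, rfl⟩, rfl⟩
      show AA b (gens' b i) ∈ Ideal.span {qq (b - 1) ^ 2}
      rw [gens']
      by_cases h : (i : ℕ) + 1 < b
      · rw [dif_pos h]
        have key : qq ((i : ℕ) + 1) = qq (i : ℕ) ^ 2 + 2 * qq (i : ℕ) := by
          rw [qq, qq, pow_succ, pow_mul]; ring
        have : AA b (X i ^ 2 - (-2 * X i + X ⟨(i : ℕ) + 1, h⟩)) = 0 := by
          simp only [map_sub, map_add, map_mul, map_pow, map_neg, map_ofNat, AA, aeval_X]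
          rw [key]; ring
        rw [this]; exact Ideal.zero_mem _
      · rw [dif_neg h]
        have hib : (i : ℕ) = b - 1 := by have := i.isLt; omega
        have : AA b (X i ^ 2) = qq (b - 1) ^ 2 := by
          rw [map_pow, AA, aeval_X, hib]
        rw [this]
        exact Ideal.subset_span rfl
    have hmem2 := hle hmem
    rw [Ideal.mem_span_singleton] at hmem2
    have hA1 : (AA b).toRingHom ((1 + X i0) ^ n - g) = (1 + Polynomial.X) ^ n - AA b g := by
      show AA b ((1 + X i0) ^ n - g) = _
      rw [map_sub, map_pow, map_add, map_one]
      have : AA b (X i0) = Polynomial.X := by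
        rw [AA, aeval_X]
        show qq 0 = _
        rw [qq]; ring
      rw [this]
    rwa [hA1] at hmem2
  -- degree bound on AA b g
  have hdd_lt : ∀ m' ∈ g.support, dd m' < 2 ^ b := by
    intro m' hm'
    exact sum_pow_lt (fun i => m' i) (hml m' hm')
  have hdegAg : (AA b g).natDegree ≤ 2 ^ b - 1 := by
    have hAg : AA b g = ∑ m' ∈ g.support, AA b (monomial m' (g.coeff m')) := by
      conv_lhs => rw [g.as_sum]
      rw [map_sum]
    rw [hAg]
    refine Polynomial.natDegree_sum_le_of_forall_le _ _ (fun m' hm' => ?_)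
    rw [AA_monomial]
    refine le_trans (Polynomial.natDegree_C_mul_le _ _) ?_
    rw [prodQ_natDegree]
    have := hdd_lt m' hm'
    omega
  have hpowb : (1 : ℕ) ≤ 2 ^ (b - 1) := Nat.one_le_two_pow
  have hpowb' : 2 ^ (b - 1) * 2 = 2 ^ b := by
    rw [← pow_succ]; congr 1; omega
  -- AA b g = (1+X)^n
  have hAgn : AA b g = (1 + Polynomial.X) ^ n := by
    by_contra hne
    have hq0 : (1 + Polynomial.X : Polynomial ℤ) ^ n - AA b g ≠ 0 :=
      sub_ne_zero.mpr (fun hh => hne hh.symm)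
    have hdegf : (qq (b - 1) ^ 2).natDegree = 2 ^ b := by
      rw [Polynomial.natDegree_pow, qq_natDegree]; omega
    have hled := Polynomial.natDegree_le_of_dvd hfdvd hq0
    rw [hdegf] at hled
    have hsub : ((1 + Polynomial.X : Polynomial ℤ) ^ n - AA b g).natDegree ≤ 2 ^ b - 1 := by
      refine le_trans (Polynomial.natDegree_sub_le _ _) (max_le ?_ hdegAg)
      have h1 : ((1 + Polynomial.X : Polynomial ℤ) ^ n).natDegree ≤ n * 1 := by
        refine le_trans Polynomial.natDegree_pow_le ?_
        rw [one_add_X_natDegree]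
      omega
    omega
  -- bit indices
  have hLb : ∀ j ∈ n.bitIndices, j < b := by
    intro j hj
    have h2 := Nat.two_pow_le_of_mem_bitIndices hj
    have hjlt : 2 ^ j < 2 ^ (b - 1) := lt_of_le_of_lt h2 hnlt
    have := (Nat.pow_lt_pow_iff_right (by norm_num : 1 < 2)).mp hjlt
    omega
  set S : Finset (Fin b) := Finset.univ.filter (fun i : Fin b => (i : ℕ) ∈ n.bitIndices) with hS
  have hsum : ∑ i ∈ S, 2 ^ (i : ℕ) = n := by
    rw [hS, Finset.sum_filter,
      Fin.sum_univ_eq_sum_range (fun j => if j ∈ n.bitIndices then 2 ^ j else 0) b,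
      ← Finset.sum_filter]
    have heq : (Finset.range b).filter (· ∈ n.bitIndices) = n.bitIndices.toFinset := by
      ext j
      simp only [Finset.mem_filter, Finset.mem_range, List.mem_toFinset]
      exact ⟨fun h => h.2, fun h => ⟨hLb j h, h⟩⟩
    rw [heq, List.sum_toFinset _ (List.SortedLT.nodup Nat.bitIndices_sorted)]
    exact Nat.twoPowSum_bitIndices n
  set hp : MvPolynomial (Fin b) ℤ := ∏ i ∈ S, (1 + X i) with hhp
  have hAh : AA b hp = (1 + Polynomial.X) ^ n := by
    rw [hhp, map_prod]
    have hcong : ∀ i ∈ S, AA b (1 + X i) = (1 + Polynomial.X) ^ 2 ^ (i : ℕ) := by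
      intro i _
      rw [map_add, map_one, AA, aeval_X, qq]; ring
    rw [Finset.prod_congr rfl hcong, Finset.prod_pow_eq_pow_sum, hsum]
  -- coefficients of hp
  have hcoeff : ∀ m' : Fin b →₀ ℕ, hp.coeff m' =
      (((S.powerset.filter (fun t => (∑ i ∈ t, Finsupp.single i 1 : Fin b →₀ ℕ) = m'))).card : ℤ) :=
    fun m' => coeff_prod_one_add_X S m'
  have hcard : ∀ m' : Fin b →₀ ℕ,
      ((S.powerset.filter (fun t => (∑ i ∈ t, Finsupp.single i 1 : Fin b →₀ ℕ) = m'))).card ≤ 1 := by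
    intro m'
    refine Finset.card_le_one.mpr (fun t ht u hu => ?_)
    rw [Finset.mem_filter] at ht hu
    exact nu_inj (ht.2.trans hu.2.symm)
  have hmlh : ∀ m' ∈ hp.support, ∀ i : Fin b, m' i ≤ 1 := by
    intro m' hm' i
    rw [MvPolynomial.mem_support_iff, hcoeff m'] at hm'
    have : ((S.powerset.filter
        (fun t => (∑ i ∈ t, Finsupp.single i 1 : Fin b →₀ ℕ) = m'))).card ≠ 0 := by
      intro h0; rw [h0] at hm'; exact hm' rfl
    obtain ⟨t, ht⟩ := Finset.card_ne_zero.mp this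
    rw [Finset.mem_filter] at ht
    rw [← ht.2, nu_apply]
    split <;> omega
  -- g = hp
  have hgh : g = hp := by
    have hz : AA b (g - hp) = 0 := by rw [map_sub, hAgn, hAh, sub_self]
    have hml2 : ∀ m' ∈ (g - hp).support, ∀ i : Fin b, m' i ≤ 1 := by
      intro m' hm' i
      have := MvPolynomial.support_sub _ g hp hm'
      rcases Finset.mem_union.mp this with h | h
      · exact hml m' h i
      · exact hmlh m' h i
    have := AA_inj (g - hp) hml2 hz
    exact sub_eq_zero.mp this
  rw [hgh, hhp, coeff_prod_one_add_X]
  have := hcard m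
  interval_cases h : ((S.powerset.filter
      (fun t => (∑ i ∈ t, Finsupp.single i 1 : Fin b →₀ ℕ) = m))).card
  · left; norm_num
  · right; norm_num
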